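/- arXiv:2602.03694 — 7 statements merged into one kernel-verified Lean document; each statement's English description precedes it below -/
import Mathlib

section
/- Let A be a C*-algebra (not necessarily unital), B a closed star-subalgebra of A, and E : A → A a conditional expectation from A onto B with finite probabilistic index. Then A is complete with respect to the norm a ↦ ‖E(a^* a)‖^{1/2} induced by E; that is, every sequence (x_k) in A satisfying ‖E((x_k − x_l)^* (x_k − x_l))‖ → 0 as k, l → ∞ converges in this norm to some element of A. (Equivalently, this norm is equivalent to the C*-norm of A, so that A is already a Hilbert C*-module over B with respect to the B-valued inner product ⟨x, y⟩ = E(x^* y).) -/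
/-- If the conditional expectation `E` has finite probabilistic index, then `A`
is complete with respect to the norm `a ↦ ‖E (a⋆ a)‖^(1/2)` induced by `E`: every sequence
that is Cauchy for this norm converges, in this norm, to some element of `A`. -/
theorem complete_in_expectation_norm_of_finite_probabilistic_index
    {A : Type*} [NonUnitalCStarAlgebra A] [PartialOrder A] [StarOrderedRing A]
    (B : NonUnitalStarSubalgebra ℂ A) (hB : IsClosed (B : Set A))
    (E : A →L[ℂ] A)
    (hrange : ∀ a : A, E a ∈ B)
    (hfix : ∀ b ∈ B, E b = b)
    (hpos : ∀ a : A, 0 ≤ a → 0 ≤ E a)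
    (hbimod : ∀ b ∈ B, ∀ b' ∈ B, ∀ x : A, E (b * x * b') = b * E x * b')
    (hindex : ∃ γ : ℝ, 1 ≤ γ ∧ ∀ a : A, 0 ≤ a → a ≤ γ • E a) :
    ∀ x : ℕ → A,
      (∀ ε : ℝ, 0 < ε → ∃ N : ℕ, ∀ k ≥ N, ∀ l ≥ N,
        ‖E (star (x k - x l) * (x k - x l))‖ < ε) →
      ∃ a : A, Filter.Tendsto (fun k => ‖E (star (x k - a) * (x k - a))‖)
        Filter.atTop (nhds 0) := by
  obtain ⟨γ, hγ1, hγ⟩ := hindex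
  have hγ0 : (0 : ℝ) < γ := lt_of_lt_of_le one_pos hγ1
  intro x hx
  -- the sequence is Cauchy in the C*-norm
  have key : ∀ y : A, ‖y‖ ^ 2 ≤ γ * ‖E (star y * y)‖ := by
    intro y
    have h1 : (0 : A) ≤ star y * y := star_mul_self_nonneg y
    have h2 : star y * y ≤ γ • E (star y * y) := hγ _ h1
    calc ‖y‖ ^ 2 = ‖star y * y‖ := by
          rw [CStarRing.norm_star_mul_self, sq]
      _ ≤ ‖γ • E (star y * y)‖ := CStarAlgebra.norm_le_norm_of_nonneg_of_le h1 h2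
      _ = γ * ‖E (star y * y)‖ := by
          rw [norm_smul, Real.norm_eq_abs, abs_of_pos hγ0]
  have hcs : CauchySeq x := by
    rw [Metric.cauchySeq_iff]
    intro ε hε
    obtain ⟨N, hN⟩ := hx (ε ^ 2 / γ) (by positivity)
    refine ⟨N, fun k hk l hl => ?_⟩
    have h1 := key (x k - x l)
    have h2 := hN k hk l hl
    have : ‖x k - x l‖ ^ 2 < ε ^ 2 := by
      calc ‖x k - x l‖ ^ 2 ≤ γ * ‖E (star (x k - x l) * (x k - x l))‖ := h1
        _ < γ * (ε ^ 2 / γ) := by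
            exact (mul_lt_mul_iff_right₀ hγ0).mpr h2
        _ = ε ^ 2 := by field_simp
    rw [dist_eq_norm]
    exact lt_of_pow_lt_pow_left₀ 2 hε.le this
  obtain ⟨a, ha⟩ := cauchySeq_tendsto_of_complete hcs
  refine ⟨a, ?_⟩
  have hbound : ∀ k, ‖E (star (x k - a) * (x k - a))‖ ≤ ‖E‖ * ‖x k - a‖ ^ 2 := by
    intro k
    calc ‖E (star (x k - a) * (x k - a))‖
        ≤ ‖E‖ * ‖star (x k - a) * (x k - a)‖ := E.le_opNorm _
      _ ≤ ‖E‖ * (‖star (x k - a)‖ * ‖x k - a‖) := by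
          gcongr
          exact norm_mul_le _ _
      _ = ‖E‖ * ‖x k - a‖ ^ 2 := by rw [norm_star, sq]
  have htend : Filter.Tendsto (fun k => ‖E‖ * ‖x k - a‖ ^ 2) Filter.atTop (nhds 0) := by
    have h1 : Filter.Tendsto (fun k => x k - a) Filter.atTop (nhds 0) := by
      simpa using ha.sub_const a
    have h2 : Filter.Tendsto (fun k => ‖x k - a‖) Filter.atTop (nhds 0) := by
      simpa using h1.norm
    have h3 : Filter.Tendsto (fun k => ‖x k - a‖ ^ 2) Filter.atTop (nhds 0) := by
      simpa using h2.pow 2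
    simpa using h3.const_mul ‖E‖
  exact squeeze_zero (fun k => norm_nonneg _) hbound htend
end

section
/- Let A be a C*-algebra (not necessarily unital), B a closed star-subalgebra of A, and E : A → A a conditional expectation from A onto B with finite probabilistic index. Then A = A·B; more precisely: (i) every a ∈ A lies in the norm-closure of the linear span of {x b : x ∈ A, b ∈ B}; and (ii) every approximate identity for B is an approximate identity for A, i.e., if (u_λ) is a net of positive elements of B with ‖u_λ‖ ≤ 1 for all λ and ‖u_λ b − b‖ → 0 and ‖b u_λ − b‖ → 0 for every b ∈ B, then ‖u_λ a − a‖ → 0 and ‖a u_λ − a‖ → 0 for every a ∈ A. -/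
open Unitization in
/-- Key estimate: if `star a * a ≤ γ • c` with `c ≥ 0`, then for positive contractions `u`,
`‖a - a * u‖ ^ 2 ≤ γ * ‖c - c * u‖`. -/
lemma key_estimate {A : Type*} [NonUnitalCStarAlgebra A] [PartialOrder A] [StarOrderedRing A]
    (γ : ℝ) (hγ : 0 ≤ γ) (a c u : A) (hc : 0 ≤ c)
    (h : star a * a ≤ γ • c) (hu0 : 0 ≤ u) (hu1 : ‖u‖ ≤ 1) :
    ‖a - a * u‖ ^ 2 ≤ γ * ‖c - c * u‖ := by
  have husa : IsSelfAdjoint u := .of_nonneg hu0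
  have hu' : (0 : Unitization ℂ A) ≤ (u : Unitization ℂ A) := inr_nonneg_iff.mpr hu0
  have hu1' : (u : Unitization ℂ A) ≤ 1 := by
    rw [← CStarAlgebra.norm_le_one_iff_of_nonneg _ hu', Unitization.norm_inr]
    exact hu1
  set v : Unitization ℂ A := 1 - (u : Unitization ℂ A) with hv
  have hv0 : (0 : Unitization ℂ A) ≤ v := sub_nonneg.mpr hu1'
  have hv1 : v ≤ 1 := sub_le_self _ hu'
  have hvsa : IsSelfAdjoint v := by
    simpa [hv] using (IsSelfAdjoint.one (Unitization ℂ A)).sub (husa.inr ℂ)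
  have hvnorm : ‖v‖ ≤ 1 := by
    calc ‖v‖ ≤ ‖(1 : Unitization ℂ A)‖ :=
          CStarAlgebra.norm_le_norm_of_nonneg_of_le hv0 hv1
    _ = 1 := norm_one
  have hsa1 : IsSelfAdjoint (star a * a) := IsSelfAdjoint.star_mul_self a
  have hsa2 : IsSelfAdjoint (γ • c) := IsSelfAdjoint.smul (star_trivial γ) (.of_nonneg hc)
  have hle : ((star a * a : A) : Unitization ℂ A) ≤ ((γ • c : A) : Unitization ℂ A) :=
    (Unitization.inr_le_iff _ _ hsa1 hsa2).mpr h
  have hconj : star v * ((star a * a : A) : Unitization ℂ A) * v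
      ≤ star v * ((γ • c : A) : Unitization ℂ A) * v := star_left_conjugate_le_conjugate hle v
  have hw : ((a : Unitization ℂ A)) * v = ((a - a * u : A) : Unitization ℂ A) := by
    simp [hv, mul_sub, Unitization.inr_sub, Unitization.inr_mul]
  have hlhs : star v * ((star a * a : A) : Unitization ℂ A) * v
      = star (((a - a * u : A) : Unitization ℂ A)) * (((a - a * u : A) : Unitization ℂ A)) := by
    rw [← hw, star_mul, hvsa.star_eq]
    simp only [Unitization.inr_mul, Unitization.inr_star]
    noncomm_ring
  have hrhs : star v * ((γ • c : A) : Unitization ℂ A) * v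
      = γ • (v * ((c : A) : Unitization ℂ A) * v) := by
    rw [hvsa.star_eq, Unitization.inr_smul]
    simp [smul_mul_assoc, mul_smul_comm]
  have hnorm1 : ‖a - a * u‖ ^ 2
      = ‖star (((a - a * u : A) : Unitization ℂ A)) * (((a - a * u : A) : Unitization ℂ A))‖ := by
    rw [CStarRing.norm_star_mul_self, Unitization.norm_inr, sq]
  have hposl : (0 : Unitization ℂ A)
      ≤ star (((a - a * u : A) : Unitization ℂ A)) * (((a - a * u : A) : Unitization ℂ A)) :=
    star_mul_self_nonneg _
  have hle2 : ‖star (((a - a * u : A) : Unitization ℂ A)) * (((a - a * u : A) : Unitization ℂ A))‖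
      ≤ ‖γ • (v * ((c : A) : Unitization ℂ A) * v)‖ := by
    apply CStarAlgebra.norm_le_norm_of_nonneg_of_le hposl
    rw [← hrhs, ← hlhs]
    exact hconj
  have hcv : ((c : A) : Unitization ℂ A) * v = ((c - c * u : A) : Unitization ℂ A) := by
    simp [hv, mul_sub, Unitization.inr_sub, Unitization.inr_mul]
  have hle3 : ‖v * ((c : A) : Unitization ℂ A) * v‖ ≤ ‖c - c * u‖ := by
    calc ‖v * ((c : A) : Unitization ℂ A) * v‖
        ≤ ‖v‖ * ‖((c : A) : Unitization ℂ A) * v‖ := by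
          rw [mul_assoc]; exact norm_mul_le _ _
      _ ≤ 1 * ‖((c : A) : Unitization ℂ A) * v‖ := by
          gcongr
      _ = ‖c - c * u‖ := by rw [one_mul, hcv, Unitization.norm_inr]
  calc ‖a - a * u‖ ^ 2
      ≤ ‖γ • (v * ((c : A) : Unitization ℂ A) * v)‖ := hnorm1 ▸ hle2
    _ = γ * ‖v * ((c : A) : Unitization ℂ A) * v‖ := by
        rw [norm_smul, Real.norm_eq_abs, abs_of_nonneg hγ]
    _ ≤ γ * ‖c - c * u‖ := by gcongr

/-- `cfcₙ` of an element of a closed star subalgebra stays in the subalgebra. -/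
lemma cfcn_mem_of_isClosed {A : Type*} [NonUnitalCStarAlgebra A] [PartialOrder A]
    [StarOrderedRing A] (B : NonUnitalStarSubalgebra ℂ A) (hB : IsClosed (B : Set A))
    {c : A} (hc : IsSelfAdjoint c) (hcB : c ∈ B) (f : ℝ → ℝ) : cfcₙ f c ∈ B := by
  by_cases hf : ContinuousOn f (quasispectrum ℝ c) ∧ f 0 = 0
  · obtain ⟨hf, hf0⟩ := hf
    rw [cfcₙ_apply f c hf hf0 hc]
    generalize (⟨⟨_, hf.restrict⟩, hf0⟩ : ContinuousMapZero (quasispectrum ℝ c) ℝ) = g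
    have h0 : ((0 : quasispectrum ℝ c) : ℝ) = 0 := rfl
    haveI : Fact (0 ∈ quasispectrum ℝ c) := ⟨quasispectrum.zero_mem ℝ c⟩
    have hdense := ContinuousMapZero.adjoin_id_dense (quasispectrum ℝ c)
    have hclosed : IsClosed ((cfcₙHom hc (R := ℝ)) ⁻¹' (B : Set A)) :=
      hB.preimage (cfcₙHom_isClosedEmbedding hc).continuous
    have hsub : (NonUnitalStarAlgebra.adjoin ℝ {(ContinuousMapZero.id (quasispectrum ℝ c))} : Set _)
        ⊆ (cfcₙHom hc (R := ℝ)) ⁻¹' (B : Set A) := by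
      intro x hx
      induction hx using NonUnitalStarAlgebra.adjoin_induction with
      | mem x hx =>
        simp only [Set.mem_singleton_iff] at hx
        subst hx
        have : ContinuousMapZero.id (quasispectrum ℝ c) = ⟨(ContinuousMap.id ℝ).restrict <| quasispectrum ℝ c, rfl⟩ := rfl
        simp only [Set.mem_preimage, SetLike.mem_coe, cfcₙHom_id hc]
        exact hcB
      | add x y _ _ hx hy => simpa only [Set.mem_preimage, SetLike.mem_coe, map_add] using add_mem hx hy
      | zero => simpa only [Set.mem_preimage, SetLike.mem_coe, map_zero] using zero_mem B
      | mul x y _ _ hx hy => simpa only [Set.mem_preimage, SetLike.mem_coe, map_mul] using mul_mem hx hy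
      | smul r x _ hx =>
        simp only [Set.mem_preimage, map_smul]
        rw [← algebraMap_smul ℂ r (cfcₙHom hc (R := ℝ) x)]
        exact B.smul_mem _ hx
      | star x _ hx => simpa only [Set.mem_preimage, SetLike.mem_coe, map_star] using star_mem hx
    have := hclosed.closure_subset_iff.mpr hsub
    exact this (by rw [hdense.closure_eq]; trivial)
  · rw [cfcₙ_apply_of_not_and_and c (by tauto)]
    exact zero_mem B

/-- If the conditional expectation `E : A → B` has finite probabilistic index,
then `A = A·B`: (i) every `a ∈ A` lies in the closure of the span of products `x * b` with
`x ∈ A`, `b ∈ B`; and (ii) every approximate identity for `B` is an approximate identity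
for `A`. -/
theorem eq_mul_closure_and_approx_identity_of_finite_probabilistic_index
    {A : Type*} [NonUnitalCStarAlgebra A] [PartialOrder A] [StarOrderedRing A]
    (B : NonUnitalStarSubalgebra ℂ A) (hB : IsClosed (B : Set A))
    (E : A →L[ℂ] A)
    (hrange : ∀ a : A, E a ∈ B)
    (hfix : ∀ b ∈ B, E b = b)
    (hpos : ∀ a : A, 0 ≤ a → 0 ≤ E a)
    (hbimod : ∀ b ∈ B, ∀ b' ∈ B, ∀ x : A, E (b * x * b') = b * E x * b')
    (hindex : ∃ γ : ℝ, 1 ≤ γ ∧ ∀ a : A, 0 ≤ a → a ≤ γ • E a) :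
    (∀ a : A, a ∈ closure (Submodule.span ℂ
        {y : A | ∃ x : A, ∃ b ∈ B, y = x * b} : Set A)) ∧
    (∀ (ι : Type) (l : Filter ι), l.NeBot → ∀ u : ι → A,
      (∀ i, u i ∈ B ∧ 0 ≤ u i ∧ ‖u i‖ ≤ 1) →
      (∀ b ∈ B, Filter.Tendsto (fun i => ‖u i * b - b‖) l (nhds 0)) →
      (∀ b ∈ B, Filter.Tendsto (fun i => ‖b * u i - b‖) l (nhds 0)) →
      ∀ a : A, Filter.Tendsto (fun i => ‖u i * a - a‖) l (nhds 0) ∧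
        Filter.Tendsto (fun i => ‖a * u i - a‖) l (nhds 0)) := by
  obtain ⟨γ, hγ1, hγ⟩ := hindex
  have hγ0 : (0 : ℝ) ≤ γ := zero_le_one.trans hγ1
  constructor
  · -- Part (i)
    intro a
    set c := E (star a * a) with hcdef
    have hc0 : 0 ≤ c := hpos _ (star_mul_self_nonneg a)
    have hcB : c ∈ B := hrange _
    have hcsa : IsSelfAdjoint c := .of_nonneg hc0
    have hsaa : star a * a ≤ γ • c := hγ _ (star_mul_self_nonneg a)
    rw [Metric.mem_closure_iff]
    intro δ hδ
    obtain ⟨n, hn⟩ := exists_nat_gt (γ / δ ^ 2)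
    set ε : ℝ := 1 / (n + 1) with hε
    have hε0 : (0 : ℝ) < ε := by positivity
    set f : ℝ → ℝ := fun t => t / (t + ε) with hfdef
    have hσ : ∀ t ∈ quasispectrum ℝ c, 0 ≤ t := quasispectrum_nonneg_of_nonneg c hc0
    have hfc : ContinuousOn f (quasispectrum ℝ c) := by
      apply ContinuousOn.div continuousOn_id (by fun_prop)
      intro t ht
      have := hσ t ht
      positivity
    have hf0 : f 0 = 0 := by simp [hfdef]
    set b := cfcₙ f c with hbdef
    have hbB : b ∈ B := cfcn_mem_of_isClosed B hB hcsa hcB f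
    have hb0 : 0 ≤ b := cfcₙ_nonneg (fun t ht => by
      have := hσ t ht
      simp only [hfdef]
      positivity)
    have hb1 : ‖b‖ ≤ 1 := norm_cfcₙ_le (fun t ht => by
      have := hσ t ht
      simp only [hfdef]
      rw [Real.norm_eq_abs, abs_of_nonneg (by positivity), div_le_one (by positivity)]
      linarith)
    have hcb : ‖c - c * b‖ ≤ ε := by
      have h1 : c - c * b = cfcₙ (fun t : ℝ => t - t * f t) c := by
        rw [cfcₙ_sub (fun t : ℝ => t) (fun t : ℝ => t * f t) c (by fun_prop) rfl
            (ContinuousOn.mul continuousOn_id hfc) (by simp [hf0]),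
          cfcₙ_mul (fun t : ℝ => t) f c (by fun_prop) rfl hfc hf0, cfcₙ_id' ℝ c]
      rw [h1]
      apply norm_cfcₙ_le
      intro t ht
      have ht0 := hσ t ht
      have hden : (0 : ℝ) < t + ε := by positivity
      have heq : t - t * (t / (t + ε)) = t * ε / (t + ε) := by
        field_simp
        ring
      simp only [hfdef, heq]
      rw [Real.norm_eq_abs, abs_of_nonneg (by positivity), div_le_iff₀ hden]
      nlinarith
    have hkey := key_estimate γ hγ0 a c b hc0 hsaa hb0 hb1
    refine ⟨a * b, Submodule.subset_span ⟨a, b, hbB, rfl⟩, ?_⟩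
    rw [dist_eq_norm]
    have hγε : γ * ε < δ ^ 2 := by
      rw [hε, mul_one_div, div_lt_iff₀ (by positivity)]
      have := (div_lt_iff₀ (by positivity : (0:ℝ) < δ ^ 2)).mp hn
      nlinarith
    have h2 : ‖a - a * b‖ ^ 2 < δ ^ 2 := by
      calc ‖a - a * b‖ ^ 2 ≤ γ * ‖c - c * b‖ := hkey
        _ ≤ γ * ε := by gcongr
        _ < δ ^ 2 := hγε
    nlinarith [norm_nonneg (a - a * b)]
  · -- Part (ii)
    intro ι l hl u hu hul hur
    have keyR : ∀ a : A, Filter.Tendsto (fun i => ‖a * u i - a‖) l (nhds 0) := by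
      intro a
      set c := E (star a * a) with hcdef
      have hc0 : 0 ≤ c := hpos _ (star_mul_self_nonneg a)
      have hcB : c ∈ B := hrange _
      have hsaa : star a * a ≤ γ • c := hγ _ (star_mul_self_nonneg a)
      have hbound : ∀ i, ‖a * u i - a‖ ≤ Real.sqrt (γ * ‖c * u i - c‖) := by
        intro i
        have hk := key_estimate γ hγ0 a c (u i) hc0 hsaa (hu i).2.1 (hu i).2.2
        rw [norm_sub_rev a, norm_sub_rev c] at hk
        exact (Real.le_sqrt (norm_nonneg _) (by positivity)).mpr hk
      have h1 : Filter.Tendsto (fun i => ‖c * u i - c‖) l (nhds 0) := hur c hcB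
      have h2 : Filter.Tendsto (fun i => γ * ‖c * u i - c‖) l (nhds 0) := by
        simpa using h1.const_mul γ
      have h3 : Filter.Tendsto (fun i => Real.sqrt (γ * ‖c * u i - c‖)) l (nhds 0) := by
        have := (Real.continuous_sqrt.tendsto 0).comp h2
        simpa only [Function.comp_def, Real.sqrt_zero] using this
      exact squeeze_zero (fun i => norm_nonneg _) hbound h3
    intro a
    refine ⟨?_, keyR a⟩
    have := keyR (star a)
    have heq : (fun i => ‖u i * a - a‖) = fun i => ‖star a * u i - star a‖ := by
      funext i
      rw [← norm_star]
      congr 1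
      have husa : star (u i) = u i := (IsSelfAdjoint.of_nonneg (hu i).2.1).star_eq
      simp [star_sub, star_mul, husa]
    rw [heq]
    exact this
end

section
/- Let A be a C*-algebra (not necessarily unital), B a closed star-subalgebra of A, and E : A → A a conditional expectation from A onto B with finite probabilistic index. Then for a ∈ A the following are equivalent: (i) a ∈ B; (ii) E(a x) = a E(x) for all x ∈ A. (This is the statement {e_E}' ∩ λ(A) = λ(B) about the Jones projection of the basic construction, expressed without reference to the basic construction: the equality e_E λ(a) = λ(a) e_E of operators on the Hilbert B-module completion of A is equivalent to condition (ii).) -/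
open scoped ContinuousMapZero

def NonUnitalStarSubalgebra.realify {A : Type*} [NonUnitalCStarAlgebra A]
    (B : NonUnitalStarSubalgebra ℂ A) : NonUnitalStarSubalgebra ℝ A where
  carrier := B
  add_mem' hx hy := add_mem hx hy
  zero_mem' := zero_mem B
  mul_mem' hx hy := mul_mem hx hy
  smul_mem' r x hx := by
    have : (r : ℂ) • x ∈ B := SMulMemClass.smul_mem (r : ℂ) hx
    rwa [Complex.coe_smul] at this
  star_mem' hx := star_mem hx

lemma cfcn_mem_of_isClosed_s5 {A : Type*} [NonUnitalCStarAlgebra A]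
    (S : NonUnitalStarSubalgebra ℝ A) (hS : IsClosed (S : Set A)) {h : A}
    (hh : IsSelfAdjoint h) (hmem : h ∈ S) (f : ℝ → ℝ)
    (hf : ContinuousOn f (quasispectrum ℝ h)) (hf0 : f 0 = 0) : cfcₙ f h ∈ S := by
  rw [cfcₙ_apply f h hf hf0 hh]
  set φ : C(quasispectrum ℝ h, ℝ)₀ →⋆ₙₐ[ℝ] A := cfcₙHom hh with hφ
  suffices hall : ∀ g : C(quasispectrum ℝ h, ℝ)₀, φ g ∈ S from hall _
  intro g
  have hdense := ContinuousMapZero.adjoin_id_dense (quasispectrum ℝ h)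
  have hcl : IsClosed (SetLike.coe (NonUnitalStarSubalgebra.comap φ S)) :=
    hS.preimage (cfcₙHom_isClosedEmbedding hh).continuous
  have hsub : (NonUnitalStarAlgebra.adjoin ℝ
      {(ContinuousMapZero.id (quasispectrum ℝ h) : C(quasispectrum ℝ h, ℝ)₀)} : Set _) ⊆
      SetLike.coe (NonUnitalStarSubalgebra.comap φ S) := by
    apply NonUnitalStarAlgebra.adjoin_le
    simp only [Set.singleton_subset_iff, SetLike.mem_coe, NonUnitalStarSubalgebra.mem_comap]
    show φ (ContinuousMapZero.id (quasispectrum ℝ h)) ∈ S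
    have hid : φ (ContinuousMapZero.id (quasispectrum ℝ h)) = h := cfcₙHom_id hh
    rwa [hid]
  have hg : g ∈ closure (NonUnitalStarAlgebra.adjoin ℝ
      {(ContinuousMapZero.id (quasispectrum ℝ h) : C(quasispectrum ℝ h, ℝ)₀)} : Set _) := by
    rw [hdense.closure_eq]; trivial
  exact closure_minimal hsub hcl hg

set_option maxHeartbeats 1000000 in
lemma approx_aux {A : Type*} [NonUnitalCStarAlgebra A] [PartialOrder A] [StarOrderedRing A]
    (B : NonUnitalStarSubalgebra ℂ A) (hB : IsClosed (B : Set A))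
    (E : A →L[ℂ] A) (hrange : ∀ a : A, E a ∈ B) (hpos : ∀ a : A, 0 ≤ a → 0 ≤ E a)
    {γ : ℝ} (hγ : 1 ≤ γ) (hind : ∀ a : A, 0 ≤ a → a ≤ γ • E a)
    (a c : A) {ε : ℝ} (hε : 0 < ε) :
    ∃ u ∈ B, ‖a - a * u‖ < ε ∧ ‖c - c * u‖ < ε := by
  have hγ0 : (0:ℝ) < γ := lt_of_lt_of_le one_pos hγ
  set h := E (star a * a + star c * c) with hhdef
  have hsum : (0:A) ≤ star a * a + star c * c :=
    add_nonneg (star_mul_self_nonneg a) (star_mul_self_nonneg c)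
  have hh0 : (0:A) ≤ h := hpos _ hsum
  have hhB : h ∈ B := hrange _
  have hhsa : IsSelfAdjoint h := IsSelfAdjoint.of_nonneg hh0
  set δ : ℝ := ε ^ 2 / (2 * γ) with hδdef
  have hδ : 0 < δ := by positivity
  set f : ℝ → ℝ := fun t => t * (|t| + δ)⁻¹ with hfdef
  have hfc : Continuous f :=
    continuous_id.mul ((continuous_abs.add continuous_const).inv₀ (fun t => (add_pos_of_nonneg_of_pos (abs_nonneg t) hδ).ne'))
  have hf0 : f 0 = 0 := by simp [hfdef]
  set u := cfcₙ f h with hudef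
  have husa : IsSelfAdjoint u := cfcₙ_predicate f h
  have huB : u ∈ B := cfcn_mem_of_isClosed_s5 B.realify hB hhsa hhB f hfc.continuousOn hf0
  set G : ℝ → ℝ := fun t => t - f t * t - (t * f t - (f t * t) * f t) with hGdef
  have hG0 : G 0 = 0 := by simp [hGdef, hf0]
  set v := cfcₙ G h with hvdef
  have hvsa : IsSelfAdjoint v := cfcₙ_predicate G h
  -- identify v with the algebraic expression
  have e_fh : cfcₙ (fun t => f t * t) h = u * h := by
    rw [cfcₙ_mul f (fun t : ℝ => t) h hfc.continuousOn hf0 continuous_id.continuousOn rfl,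
      cfcₙ_id' ℝ h]
  have e_hf : cfcₙ (fun t => t * f t) h = h * u := by
    rw [cfcₙ_mul (fun t : ℝ => t) f h continuous_id.continuousOn rfl hfc.continuousOn hf0,
      cfcₙ_id' ℝ h]
  have e_fhf : cfcₙ (fun t => (f t * t) * f t) h = u * h * u := by
    rw [cfcₙ_mul (fun t => f t * t) f h (hfc.mul continuous_id).continuousOn (by simp [hf0])
      hfc.continuousOn hf0, e_fh]
  have hv : v = h - u * h - (h * u - u * h * u) := by
    rw [hvdef]
    rw [show G = fun t => (t - f t * t) - (t * f t - (f t * t) * f t) from rfl]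
    rw [cfcₙ_sub (fun t => t - f t * t) (fun t => t * f t - (f t * t) * f t) h
      (continuous_id.sub (hfc.mul continuous_id)).continuousOn (by simp [hf0])
      ((continuous_id.mul hfc).sub ((hfc.mul continuous_id).mul hfc)).continuousOn
      (by simp [hf0])]
    rw [cfcₙ_sub (fun t : ℝ => t) (fun t => f t * t) h continuous_id.continuousOn rfl
      (hfc.mul continuous_id).continuousOn (by simp [hf0])]
    rw [cfcₙ_sub (fun t => t * f t) (fun t => (f t * t) * f t) h
      (continuous_id.mul hfc).continuousOn (by simp [hf0])
      ((hfc.mul continuous_id).mul hfc).continuousOn (by simp [hf0])]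
    rw [cfcₙ_id' ℝ h, e_fh, e_hf, e_fhf]
  -- norm bound on v
  have hvnorm : ‖v‖ ≤ δ := by
    apply norm_cfcₙ_le
    intro t ht
    have ht0 : 0 ≤ t := quasispectrum_nonneg_of_nonneg h hh0 t ht
    have habs : |t| = t := abs_of_nonneg ht0
    have hGt : G t = t * δ ^ 2 / (t + δ) ^ 2 := by
      simp only [hGdef, hfdef, habs]
      have hne : t + δ ≠ 0 := by positivity
      field_simp
      ring
    rw [Real.norm_eq_abs, hGt, abs_of_nonneg (by positivity)]
    rw [div_le_iff₀ (by positivity)]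
    nlinarith [sq_nonneg t, sq_nonneg (t - δ), mul_nonneg ht0 hδ.le]
  -- operator inequality
  have hγv_sa : IsSelfAdjoint (γ • v) := by
    exact IsSelfAdjoint.smul (star_trivial γ) hvsa
  have key : ∀ r : A, star r * r ≤ γ • h → star (r - r * u) * (r - r * u) ≤ γ • v := by
    intro r hr
    have hrsa : IsSelfAdjoint (star (r - r * u) * (r - r * u)) := IsSelfAdjoint.star_mul_self _
    rw [← Unitization.inr_le_iff _ _ hrsa hγv_sa]
    have hw : star ((u : Unitization ℂ A)) = (u : Unitization ℂ A) := by
      rw [← Unitization.inr_star, husa.star_eq]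
    set w : Unitization ℂ A := (u : Unitization ℂ A) with hwdef
    have hrr : ((r - r * u : A) : Unitization ℂ A) = (r : Unitization ℂ A) * (1 - w) := by
      rw [mul_sub, mul_one, Unitization.inr_sub, Unitization.inr_mul]
    have e₁ : ((star (r - r * u) * (r - r * u) : A) : Unitization ℂ A)
        = star (1 - w) * ((star r * r : A) : Unitization ℂ A) * (1 - w) := by
      rw [Unitization.inr_mul, Unitization.inr_star, hrr, star_mul]
      simp only [Unitization.inr_mul, Unitization.inr_star]
      noncomm_ring
    have e₂ : star (1 - w) * ((h : Unitization ℂ A)) * (1 - w) = ((v : A) : Unitization ℂ A) := by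
      rw [star_sub, star_one, hw, hv]
      simp only [Unitization.inr_sub, Unitization.inr_mul]
      noncomm_ring
    calc ((star (r - r * u) * (r - r * u) : A) : Unitization ℂ A)
        = star (1 - w) * ((star r * r : A) : Unitization ℂ A) * (1 - w) := e₁
      _ ≤ star (1 - w) * ((γ • h : A) : Unitization ℂ A) * (1 - w) := by
          apply star_left_conjugate_le_conjugate
          exact (Unitization.inr_le_iff _ _ (IsSelfAdjoint.star_mul_self r)
            (IsSelfAdjoint.smul (star_trivial γ) hhsa)).mpr hr
      _ = γ • (star (1 - w) * ((h : A) : Unitization ℂ A) * (1 - w)) := by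
          rw [Unitization.inr_smul]
          rw [mul_smul_comm, smul_mul_assoc]
      _ = ((γ • v : A) : Unitization ℂ A) := by rw [e₂, Unitization.inr_smul]
  -- final norm estimates
  have final : ∀ r : A, star r * r ≤ γ • h → ‖r - r * u‖ < ε := by
    intro r hr
    have h1 : ‖star (r - r * u) * (r - r * u)‖ ≤ ‖γ • v‖ :=
      CStarAlgebra.norm_le_norm_of_nonneg_of_le (star_mul_self_nonneg _) (key r hr)
    have h2 : ‖γ • v‖ = γ * ‖v‖ := by
      rw [norm_smul, Real.norm_eq_abs, abs_of_pos hγ0]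
    have h3 : ‖r - r * u‖ * ‖r - r * u‖ ≤ γ * δ := by
      rw [← CStarRing.norm_star_mul_self]
      calc ‖star (r - r * u) * (r - r * u)‖ ≤ γ * ‖v‖ := h2 ▸ h1
        _ ≤ γ * δ := by nlinarith
    have hγδ : γ * δ = ε ^ 2 / 2 := by
      rw [hδdef]; field_simp
    nlinarith [norm_nonneg (r - r * u)]
  refine ⟨u, huB, final a ?_, final c ?_⟩
  · exact le_trans (le_add_of_nonneg_right (star_mul_self_nonneg c)) (hind _ hsum)
  · exact le_trans (le_add_of_nonneg_left (star_mul_self_nonneg a)) (hind _ hsum)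

/-- For a conditional expectation `E : A → B` with finite probabilistic index,
an element `a ∈ A` belongs to `B` if and only if `E (a x) = a E (x)` for all `x ∈ A`
(i.e. `{e_E}' ∩ λ(A) = λ(B)`). -/
theorem mem_iff_commutes_with_expectation
    {A : Type*} [NonUnitalCStarAlgebra A] [PartialOrder A] [StarOrderedRing A]
    (B : NonUnitalStarSubalgebra ℂ A) (hB : IsClosed (B : Set A))
    (E : A →L[ℂ] A)
    (hrange : ∀ a : A, E a ∈ B)
    (hfix : ∀ b ∈ B, E b = b)
    (hpos : ∀ a : A, 0 ≤ a → 0 ≤ E a)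
    (hbimod : ∀ b ∈ B, ∀ b' ∈ B, ∀ x : A, E (b * x * b') = b * E x * b')
    (hindex : ∃ γ : ℝ, 1 ≤ γ ∧ ∀ a : A, 0 ≤ a → a ≤ γ • E a) :
    ∀ a : A, a ∈ B ↔ ∀ x : A, E (a * x) = a * E x := by
  obtain ⟨γ, hγ, hind⟩ := hindex
  intro a
  constructor
  · -- forward direction
    intro haB x
    rw [← sub_eq_zero, ← norm_le_zero_iff]
    refine le_of_forall_pos_le_add ?_
    intro ε hε
    have hε' : 0 < ε / (‖E‖ + 1) := by positivity
    obtain ⟨u, huB, h1, h2⟩ :=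
      approx_aux B hB E hrange hpos hγ hind (a * x) (a * E x) hε'
    have hbi : E (a * x * u) = a * E x * u := hbimod a haB u huB x
    have hd : E (a * x) - a * E x
        = (E (a * x) - E (a * x * u)) + ((a * E x) * u - a * E x) := by
      rw [hbi]; abel
    have hb1 : ‖E (a * x) - E (a * x * u)‖ ≤ ‖E‖ * (ε / (‖E‖ + 1)) := by
      rw [← map_sub]
      calc ‖E (a * x - a * x * u)‖ ≤ ‖E‖ * ‖a * x - a * x * u‖ := E.le_opNorm _
        _ ≤ ‖E‖ * (ε / (‖E‖ + 1)) := by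
            have := norm_nonneg E
            nlinarith [h1, norm_nonneg (a * x - a * x * u)]
    have hb2 : ‖(a * E x) * u - a * E x‖ < ε / (‖E‖ + 1) := by
      rw [norm_sub_rev]; exact h2
    calc ‖E (a * x) - a * E x‖
        ≤ ‖E (a * x) - E (a * x * u)‖ + ‖(a * E x) * u - a * E x‖ := by
          rw [hd]; exact norm_add_le _ _
      _ ≤ ‖E‖ * (ε / (‖E‖ + 1)) + ε / (‖E‖ + 1) := by linarith
      _ = (‖E‖ + 1) * (ε / (‖E‖ + 1)) := by ring
      _ = ε := by field_simp
      _ ≤ 0 + ε := by linarith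
  · -- reverse direction
    intro hcomm
    have : a ∈ closure (B : Set A) := by
      rw [Metric.mem_closure_iff]
      intro ε hε
      obtain ⟨u, huB, h1, -⟩ := approx_aux B hB E hrange hpos hγ hind a a hε
      refine ⟨a * u, ?_, ?_⟩
      · have : E (a * u) = a * u := by rw [hcomm u, hfix u huB]
        rw [← this]; exact hrange _
      · rw [dist_eq_norm]; exact h1
    rwa [hB.closure_eq] at this
end

section
/- Let A be a C*-algebra (not necessarily unital), B a closed star-subalgebra of A, and E : A → A a conditional expectation from A onto B. If E admits a finite quasi-basis, then A and B are unital with common identity; that is, there exists e ∈ B such that e a = a and a e = a for every a ∈ A. -/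
/-- If a conditional expectation `E : A → B` admits a finite quasi-basis, then
`A` and `B` are unital with common identity: there is `e ∈ B` which is a two-sided identity
for `A`. -/
theorem unital_of_finite_quasi_basis
    {A : Type*} [NonUnitalCStarAlgebra A] [PartialOrder A] [StarOrderedRing A]
    (B : NonUnitalStarSubalgebra ℂ A) (hB : IsClosed (B : Set A))
    (E : A →L[ℂ] A)
    (hrange : ∀ a : A, E a ∈ B)
    (hfix : ∀ b ∈ B, E b = b)
    (hpos : ∀ a : A, 0 ≤ a → 0 ≤ E a)
    (hbimod : ∀ b ∈ B, ∀ b' ∈ B, ∀ x : A, E (b * x * b') = b * E x * b')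
    (hqb : ∃ (n : ℕ) (u : Fin n → A), ∀ x : A, x = ∑ i, u i * E (star (u i) * x)) :
    ∃ e ∈ B, ∀ a : A, e * a = a ∧ a * e = a := by
  obtain ⟨n, u, hu⟩ := hqb
  set l := CStarAlgebra.approximateUnit A with hl_def
  have hl := CStarAlgebra.increasingApproximateUnit A
  haveI : l.NeBot := hl.neBot
  set e : A := ∑ i, u i * E (star (u i)) with he
  -- the identity map tends to `e` along the approximate unit filter
  have h1 : Filter.Tendsto (id : A → A) l (nhds e) := by
    refine Filter.Tendsto.congr (fun x => (hu x).symm) ?_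
    refine tendsto_finset_sum _ fun i _ => ?_
    exact Filter.Tendsto.const_mul (u i)
      ((E.continuous.tendsto _).comp (hl.tendsto_mul_left (star (u i))))
  -- `e` is a two-sided unit of `A`
  have hunit_r : ∀ m : A, m * e = m := fun m =>
    tendsto_nhds_unique (Filter.Tendsto.const_mul m h1) (hl.tendsto_mul_left m)
  have hunit_l : ∀ m : A, e * m = m := fun m =>
    tendsto_nhds_unique (Filter.Tendsto.mul_const m h1) (hl.tendsto_mul_right m)
  -- key identity: `b * E e * b' = b * b'` for `b, b' ∈ B`
  have hEe : ∀ b ∈ B, ∀ b' ∈ B, b * E e * b' = b * b' := by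
    intro b hb b' hb'
    have h2 := hbimod b hb b' hb' e
    have h3 : b * e * b' = b * b' := by rw [mul_assoc, hunit_l b']
    rw [h3, hfix _ (mul_mem hb hb')] at h2
    exact h2.symm
  -- `E e` is a left identity for `B`
  have hleft : ∀ b ∈ B, E e * b = b := by
    intro b hb
    have hcB : E e * b - b ∈ B := sub_mem (mul_mem (hrange e) hb) hb
    have hc : star (E e * b - b) * (E e * b - b) = 0 := by
      have h4 := hEe (star (E e * b - b)) (star_mem hcB) b hb
      rw [mul_sub, ← mul_assoc, h4, sub_self]
    exact sub_eq_zero.mp ((CStarRing.star_mul_self_eq_zero_iff _).mp hc)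
  -- `E e` is a right identity for `B`
  have hright : ∀ b ∈ B, b * E e = b := by
    intro b hb
    have hcB : b * E e - b ∈ B := sub_mem (mul_mem hb (hrange e)) hb
    have hc : (b * E e - b) * star (b * E e - b) = 0 := by
      have h4 := hEe b hb (star (b * E e - b)) (star_mem hcB)
      rw [sub_mul, h4, sub_self]
    exact sub_eq_zero.mp ((CStarRing.mul_star_self_eq_zero_iff _).mp hc)
  -- `E e` is a right identity for all of `A`
  have hA_r : ∀ a : A, a * E e = a := by
    intro a
    conv_lhs => rw [hu a]
    rw [Finset.sum_mul]
    conv_rhs => rw [hu a]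
    refine Finset.sum_congr rfl fun i _ => ?_
    rw [mul_assoc, hright _ (hrange _)]
  -- conclude `e = E e ∈ B`
  have hee : e = E e := by
    have h5 : e * E e = e := hA_r e
    rw [hunit_l (E e)] at h5
    exact h5.symm
  exact ⟨e, hee ▸ hrange e, fun a => ⟨hunit_l a, hunit_r a⟩⟩
end

section
/- Let A be a C*-algebra (not necessarily unital), B a closed star-subalgebra of A, and E : A → A a conditional expectation from A onto B. If E admits a finite quasi-basis, then E has finite probabilistic index, i.e., there exists a real number γ ≥ 1 such that a ≤ γ•E(a) for every positive element a of A; in particular, E is faithful (E(a^* a) = 0 implies a = 0). -/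
set_option linter.unusedSectionVars false
set_option linter.unusedVariables false
set_option linter.unnecessarySeqFocus false

section aux
variable {A : Type*} [NonUnitalCStarAlgebra A] [PartialOrder A] [StarOrderedRing A]
  {B : NonUnitalStarSubalgebra ℂ A} {E : A →L[ℂ] A}

private lemma condexp_aux_eq_zero (z : A) (hzB : z ∈ B)
    (hz : ∀ b₁ ∈ B, ∀ b₂ ∈ B, b₁ * z * b₂ = 0) : z = 0 := by
  have h := hz (star z) (star_mem hzB) (star z * z) (mul_mem (star_mem hzB) hzB)
  have hw : (star z * z) * (star z * z) = 0 := by rw [← h]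
  have hsa : IsSelfAdjoint (star z * z) := IsSelfAdjoint.star_mul_self z
  have h2 : ‖star z * z‖ * ‖star z * z‖ = 0 := by
    rw [← CStarRing.norm_star_mul_self, hsa.star_eq, hw, norm_zero]
  have h3 : star z * z = 0 := by
    simpa [norm_eq_zero] using mul_self_eq_zero.mp h2
  exact (CStarRing.star_mul_self_eq_zero_iff z).mp h3

private lemma condexp_aux_right (hrange : ∀ a : A, E a ∈ B)
    (hbimod : ∀ b ∈ B, ∀ b' ∈ B, ∀ x : A, E (b * x * b') = b * E x * b')
    (x b : A) (hb : b ∈ B) : E (x * b) = E x * b := by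
  have key : E (x * b) - E x * b = 0 := by
    refine condexp_aux_eq_zero _ (sub_mem (hrange _) (mul_mem (hrange x) hb)) ?_
    intro b₁ h₁ b₂ h₂
    have e1 : b₁ * E (x * b) * b₂ = E (b₁ * (x * b) * b₂) := (hbimod b₁ h₁ b₂ h₂ (x * b)).symm
    have e2 : b₁ * (E x * b) * b₂ = E (b₁ * x * (b * b₂)) := by
      rw [hbimod b₁ h₁ (b * b₂) (mul_mem hb h₂) x]; noncomm_ring
    have e3 : b₁ * (x * b) * b₂ = b₁ * x * (b * b₂) := by noncomm_ring
    calc b₁ * (E (x * b) - E x * b) * b₂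
        = b₁ * E (x * b) * b₂ - b₁ * (E x * b) * b₂ := by noncomm_ring
      _ = 0 := by rw [e1, e2, e3, sub_self]
  exact sub_eq_zero.mp key

private lemma condexp_aux_left (hrange : ∀ a : A, E a ∈ B)
    (hbimod : ∀ b ∈ B, ∀ b' ∈ B, ∀ x : A, E (b * x * b') = b * E x * b')
    (x b : A) (hb : b ∈ B) : E (b * x) = b * E x := by
  have key : E (b * x) - b * E x = 0 := by
    refine condexp_aux_eq_zero _ (sub_mem (hrange _) (mul_mem hb (hrange x))) ?_
    intro b₁ h₁ b₂ h₂
    have e1 : b₁ * E (b * x) * b₂ = E (b₁ * (b * x) * b₂) := (hbimod b₁ h₁ b₂ h₂ (b * x)).symm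
    have e2 : b₁ * (b * E x) * b₂ = E ((b₁ * b) * x * b₂) := by
      rw [hbimod (b₁ * b) (mul_mem h₁ hb) b₂ h₂ x]; noncomm_ring
    have e3 : b₁ * (b * x) * b₂ = (b₁ * b) * x * b₂ := by noncomm_ring
    calc b₁ * (E (b * x) - b * E x) * b₂
        = b₁ * E (b * x) * b₂ - b₁ * (b * E x) * b₂ := by noncomm_ring
      _ = 0 := by rw [e1, e2, e3, sub_self]
  exact sub_eq_zero.mp key

private lemma condexp_aux_star (hrange : ∀ a : A, E a ∈ B)
    (hpos : ∀ a : A, 0 ≤ a → 0 ≤ E a) (x : A) : E (star x) = star (E x) := by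
  have hsa : ∀ v : A, IsSelfAdjoint v → IsSelfAdjoint (E v) := by
    intro v hv
    have hdec := CFC.posPart_sub_negPart v hv
    rw [← hdec, map_sub]
    exact (IsSelfAdjoint.of_nonneg (hpos _ (CFC.posPart_nonneg v))).sub
      (IsSelfAdjoint.of_nonneg (hpos _ (CFC.negPart_nonneg v)))
  set s : A := x + star x with hs
  set w : A := Complex.I • (x - star x) with hww
  have hssa : IsSelfAdjoint s := by
    simp [IsSelfAdjoint, hs, star_add, add_comm]
  have hwsa : IsSelfAdjoint w := by
    rw [IsSelfAdjoint, hww, star_smul, star_sub, star_star, Complex.star_def, Complex.conj_I]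
    module
  have hx : x = (2:ℂ)⁻¹ • (s - Complex.I • w) := by
    rw [hs, hww, smul_smul, Complex.I_mul_I]
    match_scalars <;> simp <;> ring
  have hxs : star x = (2:ℂ)⁻¹ • (s + Complex.I • w) := by
    rw [hs, hww, smul_smul, Complex.I_mul_I]
    match_scalars <;> simp <;> ring
  have e1 : E (star x) = (2:ℂ)⁻¹ • (E s + Complex.I • E w) := by
    rw [hxs, map_smul, map_add, map_smul]
  have e2 : star (E x) = (2:ℂ)⁻¹ • (E s + Complex.I • E w) := by
    rw [hx, map_smul, map_sub, map_smul, star_smul, star_sub, star_smul,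
      (hsa s hssa).star_eq, (hsa w hwsa).star_eq, Complex.star_def, Complex.conj_I]
    rw [show (starRingEnd ℂ) (2:ℂ)⁻¹ = (2:ℂ)⁻¹ by simp [Complex.ext_iff]]
    module
  exact e1.trans e2.symm

private lemma condexp_aux_ks (hrange : ∀ a : A, E a ∈ B)
    (hfix : ∀ b ∈ B, E b = b)
    (hpos : ∀ a : A, 0 ≤ a → 0 ≤ E a)
    (hbimod : ∀ b ∈ B, ∀ b' ∈ B, ∀ x : A, E (b * x * b') = b * E x * b')
    (x : A) : E (star x) * E x ≤ E (star x * x) := by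
  have h1 : 0 ≤ E (star (x - E x) * (x - E x)) := hpos _ (star_mul_self_nonneg _)
  have hexp : star (x - E x) * (x - E x)
      = star x * x - star x * E x - star (E x) * x + star (E x) * E x := by
    rw [star_sub]; noncomm_ring
  rw [hexp, map_add, map_sub, map_sub,
    condexp_aux_right hrange hbimod (star x) (E x) (hrange x),
    condexp_aux_left hrange hbimod x (star (E x)) (star_mem (hrange x)),
    hfix _ (mul_mem (star_mem (hrange x)) (hrange x))] at h1
  have h1' : 0 ≤ E (star x * x) - E (star x) * E x := by simpa [sub_add_cancel] using h1
  exact sub_nonneg.mp h1'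

end aux


/-- If a conditional expectation `E : A → B` admits a finite quasi-basis, then
`E` has finite probabilistic index; in particular, `E` is faithful. -/
theorem finite_probabilistic_index_and_faithful_of_finite_quasi_basis
    {A : Type*} [NonUnitalCStarAlgebra A] [PartialOrder A] [StarOrderedRing A]
    (B : NonUnitalStarSubalgebra ℂ A) (hB : IsClosed (B : Set A))
    (E : A →L[ℂ] A)
    (hrange : ∀ a : A, E a ∈ B)
    (hfix : ∀ b ∈ B, E b = b)
    (hpos : ∀ a : A, 0 ≤ a → 0 ≤ E a)
    (hbimod : ∀ b ∈ B, ∀ b' ∈ B, ∀ x : A, E (b * x * b') = b * E x * b')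
    (hqb : ∃ (n : ℕ) (u : Fin n → A), ∀ x : A, x = ∑ i, u i * E (star (u i) * x)) :
    (∃ γ : ℝ, 1 ≤ γ ∧ ∀ a : A, 0 ≤ a → a ≤ γ • E a) ∧
    (∀ a : A, E (star a * a) = 0 → a = 0) := by
  obtain ⟨n, u, hu⟩ := hqb
  have aux_right : ∀ x b : A, b ∈ B → E (x * b) = E x * b := fun x b hb =>
    condexp_aux_right hrange hbimod x b hb
  have aux_left : ∀ x b : A, b ∈ B → E (b * x) = b * E x := fun x b hb =>
    condexp_aux_left hrange hbimod x b hb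
  have aux_star : ∀ x : A, E (star x) = star (E x) := condexp_aux_star hrange hpos
  have aux_ks : ∀ x : A, E (star x) * E x ≤ E (star x * x) :=
    condexp_aux_ks hrange hfix hpos hbimod
  set c : A := ∑ i, u i * star (u i) with hcdef
  have hc : 0 ≤ c := Finset.sum_nonneg fun i _ => mul_star_self_nonneg _
  set β : ℝ := ‖c‖ + 1 with hβdef
  have hβ1 : 1 ≤ β := le_add_of_nonneg_left (norm_nonneg c)
  have hβ0 : 0 < β := lt_of_lt_of_le one_pos hβ1
  have Emono : ∀ x y : A, x ≤ y → E x ≤ E y := by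
    intro x y hxy
    have := hpos _ (sub_nonneg.mpr hxy)
    rw [map_sub] at this
    exact sub_nonneg.mp this
  have main : ∀ a : A, 0 ≤ a → a ≤ (β * β) • E a := by
    intro a ha
    set h : A := CFC.sqrt a with hhh
    have hh : h * h = a := CFC.sqrt_mul_sqrt_self a ha
    have hhn : (0:A) ≤ h := CFC.sqrt_nonneg a
    have hhsa : star h = h := (IsSelfAdjoint.of_nonneg hhn).star_eq
    set d : Fin n → A := fun i => E (star (u i) * h) with hdd
    have hd : h = ∑ i, u i * d i := hu h
    have hexp : ∀ p q : A, (p - β • star q) * star (p - β • star q)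
        = p * star p - β • (p * q) - β • (star q * star p) + (β * β) • (star q * q) := by
      intro p q
      rw [star_sub, star_smul, star_star]
      simp only [sub_mul, mul_sub, smul_mul_assoc, mul_smul_comm, smul_smul, star_trivial]
      module
    have hsum : (0:A) ≤ ∑ i, (h * u i - β • star (d i)) * star (h * u i - β • star (d i)) :=
      Finset.sum_nonneg fun i _ => mul_star_self_nonneg _
    have hA : ∑ i, (h * u i) * star (h * u i) = h * c * h := by
      simp only [star_mul, hhsa, hcdef, Finset.mul_sum, Finset.sum_mul, mul_assoc]
    have hB2 : ∑ i, (h * u i) * d i = a := by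
      simp only [mul_assoc, ← Finset.mul_sum, ← hd, hh]
    have hC : ∑ i, star (d i) * star (h * u i) = a := by
      have : ∑ i, star (d i) * star (h * u i) = star (∑ i, (h * u i) * d i) := by
        rw [star_sum]
        exact Finset.sum_congr rfl fun i _ => (star_mul _ _).symm
      rw [this, hB2, (IsSelfAdjoint.of_nonneg ha).star_eq]
    have hsum_eq : ∑ i, (h * u i - β • star (d i)) * star (h * u i - β • star (d i))
        = h * c * h - β • a - β • a + (β * β) • (∑ i, star (d i) * d i) := by
      rw [Finset.sum_congr rfl (fun i _ => hexp (h * u i) (d i))]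
      rw [Finset.sum_add_distrib, Finset.sum_sub_distrib, Finset.sum_sub_distrib,
        ← Finset.smul_sum, ← Finset.smul_sum, ← Finset.smul_sum, hA, hB2, hC]
    have key : β • a + β • a ≤ h * c * h + (β * β) • (∑ i, star (d i) * d i) := by
      rw [← sub_nonneg]
      have h0 := hsum
      rw [hsum_eq] at h0
      convert h0 using 1
      abel
    have hbc : h * c * h ≤ β • a := by
      have h1 := CStarAlgebra.star_left_conjugate_le_norm_smul (a := h) (b := c)
        (IsSelfAdjoint.of_nonneg hc)
      rw [hhsa, hh] at h1
      exact h1.trans (smul_le_smul_of_nonneg_right (by simp [hβdef]) ha)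
    have hKS : ∀ i, star (d i) * d i ≤ E (h * (u i * star (u i)) * h) := by
      intro i
      have h1 := aux_ks (star (u i) * h)
      have hst : star (star (u i) * h) = h * u i := by rw [star_mul, star_star, hhsa]
      rw [hst] at h1
      have hsd : star (d i) = E (h * u i) := by
        rw [hdd]
        simp only
        rw [← aux_star, hst]
      calc star (d i) * d i = E (h * u i) * E (star (u i) * h) := by rw [hsd]
        _ ≤ E ((h * u i) * (star (u i) * h)) := h1
        _ = E (h * (u i * star (u i)) * h) := by rw [show (h * u i) * (star (u i) * h)
              = h * (u i * star (u i)) * h from by noncomm_ring]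
    have hDle : ∑ i, star (d i) * d i ≤ β • E a := by
      calc ∑ i, star (d i) * d i ≤ ∑ i, E (h * (u i * star (u i)) * h) :=
            Finset.sum_le_sum fun i _ => hKS i
        _ = E (h * c * h) := by
            rw [← map_sum]
            congr 1
            simp only [hcdef, Finset.mul_sum, Finset.sum_mul, mul_assoc]
        _ ≤ E (β • a) := Emono _ _ hbc
        _ = β • E a := E.map_smul_of_tower β a
    have final1 : β • a + β • a ≤ β • a + (β * β * β) • E a := by
      refine key.trans (add_le_add hbc ?_)
      have := smul_le_smul_of_nonneg_left hDle (mul_nonneg hβ0.le hβ0.le)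
      rwa [smul_smul] at this
    have final2 : β • a ≤ (β * β * β) • E a := le_of_add_le_add_left final1
    calc a = β⁻¹ • (β • a) := by rw [smul_smul, inv_mul_cancel₀ hβ0.ne', one_smul]
      _ ≤ β⁻¹ • ((β * β * β) • E a) :=
          smul_le_smul_of_nonneg_left final2 (inv_nonneg.mpr hβ0.le)
      _ = (β * β) • E a := by rw [smul_smul]; congr 1; field_simp
  refine ⟨⟨β * β, by nlinarith, main⟩, ?_⟩
  intro a hEa
  have hp : (0:A) ≤ star a * a := star_mul_self_nonneg a
  have h1 := main _ hp
  rw [hEa, smul_zero] at h1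
  exact (CStarRing.star_mul_self_eq_zero_iff a).mp (le_antisymm h1 hp)
end

section
/- Let A be a unital C*-algebra, B a closed star-subalgebra of A containing the unit of A, and E : A → A a conditional expectation from A onto B. Suppose u_1, …, u_n and v_1, …, v_m are two finite quasi-bases for E. Then Σ_{i=1}^n u_i u_i^* = Σ_{j=1}^m v_j v_j^*; moreover, this common element Ind_W(E) := Σ_{i=1}^n u_i u_i^* is a positive invertible element of the center of A (it commutes with every element of A). Thus the Watatani index Ind_W(E) is independent of the choice of quasi-basis. -/
open Complex ComplexStarModule Finset

/-- For a conditional expectation `E : A → B` on a unital C*-algebra, the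
Watatani index `Ind_W(E) = Σᵢ uᵢ uᵢ⋆` does not depend on the choice of finite quasi-basis
`u₁, …, u_n`, and it is a positive invertible central element of `A`. -/
theorem watatani_index_well_defined_central_positive_invertible
    {A : Type*} [CStarAlgebra A] [PartialOrder A] [StarOrderedRing A]
    (B : StarSubalgebra ℂ A) (hB : IsClosed (B : Set A))
    (E : A →L[ℂ] A)
    (hrange : ∀ a : A, E a ∈ B)
    (hfix : ∀ b ∈ B, E b = b)
    (hpos : ∀ a : A, 0 ≤ a → 0 ≤ E a)
    (hbimod : ∀ b ∈ B, ∀ b' ∈ B, ∀ x : A, E (b * x * b') = b * E x * b')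
    {n m : ℕ} (u : Fin n → A) (v : Fin m → A)
    (hu : ∀ x : A, x = ∑ i, u i * E (star (u i) * x))
    (hv : ∀ x : A, x = ∑ j, v j * E (star (v j) * x)) :
    (∑ i, u i * star (u i)) = (∑ j, v j * star (v j)) ∧
    0 ≤ ∑ i, u i * star (u i) ∧
    IsUnit (∑ i, u i * star (u i)) ∧
    ∀ a : A, (∑ i, u i * star (u i)) * a = a * (∑ i, u i * star (u i)) := by
  -- E maps self-adjoint elements to self-adjoint elements
  have hsa : ∀ s : A, IsSelfAdjoint s → IsSelfAdjoint (E s) := by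
    intro s hs
    have h1 : 0 ≤ E (s⁺) := hpos _ (CFC.posPart_nonneg s)
    have h2 : 0 ≤ E (s⁻) := hpos _ (CFC.negPart_nonneg s)
    have hEs : E s = E (s⁺) - E (s⁻) := by
      rw [← map_sub]
      exact congrArg E (CFC.posPart_sub_negPart s hs).symm
    rw [hEs]
    exact (IsSelfAdjoint.of_nonneg h1).sub (IsSelfAdjoint.of_nonneg h2)
  -- E is star-preserving
  have hstar : ∀ a : A, E (star a) = star (E a) := by
    intro a
    have h1 : IsSelfAdjoint (E (ℜ a : A)) := hsa _ (ℜ a).2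
    have h2 : IsSelfAdjoint (E (ℑ a : A)) := hsa _ (ℑ a).2
    have hdec := realPart_add_I_smul_imaginaryPart a
    calc E (star a) = E (star ((ℜ a : A) + I • (ℑ a : A))) := by rw [hdec]
      _ = E ((ℜ a : A)) - I • E ((ℑ a : A)) := by
          rw [star_add, star_smul, Complex.star_def, Complex.conj_I,
            (ℜ a).2.star_eq, (ℑ a).2.star_eq, neg_smul, ← sub_eq_add_neg,
            map_sub, map_smul]
      _ = star (E ((ℜ a : A)) + I • E ((ℑ a : A))) := by
          rw [star_add, star_smul, Complex.star_def, Complex.conj_I,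
            h1.star_eq, h2.star_eq, neg_smul, ← sub_eq_add_neg]
      _ = star (E ((ℜ a : A) + I • (ℑ a : A))) := by rw [map_add, map_smul]
      _ = star (E a) := by rw [hdec]
  -- the "right-handed" quasi-basis identity for u
  have hu' : ∀ x : A, x = ∑ i, E (x * u i) * star (u i) := by
    intro x
    conv_lhs => rw [← star_star x, hu (star x)]
    rw [star_sum]
    refine Finset.sum_congr rfl fun i _ => ?_
    rw [star_mul, ← hstar, star_mul, star_star, star_star]
  -- expansion of a product via the quasi-basis v (resp. u)
  have step1v : ∀ x y : A, x * y = ∑ j, v j * (E (star (v j) * x) * y) := by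
    intro x y
    conv_lhs => rw [hv x]
    rw [Finset.sum_mul]
    simp_rw [mul_assoc]
  have step1u : ∀ x y : A, x * y = ∑ i, u i * (E (star (u i) * x) * y) := by
    intro x y
    conv_lhs => rw [hu x]
    rw [Finset.sum_mul]
    simp_rw [mul_assoc]
  -- well-definedness
  have hequal : (∑ i, u i * star (u i)) = ∑ j, v j * star (v j) := by
    calc ∑ i, u i * star (u i)
        = ∑ i, ∑ j, v j * (E (star (v j) * u i) * star (u i)) :=
          Finset.sum_congr rfl fun i _ => step1v (u i) (star (u i))
      _ = ∑ j, ∑ i, v j * (E (star (v j) * u i) * star (u i)) := Finset.sum_comm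
      _ = ∑ j, v j * ∑ i, E (star (v j) * u i) * star (u i) := by
          simp_rw [Finset.mul_sum]
      _ = ∑ j, v j * star (v j) :=
          Finset.sum_congr rfl fun j _ => by rw [← hu' (star (v j))]
  -- centrality
  have hcentral : ∀ a : A, (∑ i, u i * star (u i)) * a = a * (∑ i, u i * star (u i)) := by
    intro a
    symm
    calc a * ∑ i, u i * star (u i)
        = ∑ i, (a * u i) * star (u i) := by
          rw [Finset.mul_sum]; simp_rw [mul_assoc]
      _ = ∑ i, ∑ j, u j * (E (star (u j) * (a * u i)) * star (u i)) :=
          Finset.sum_congr rfl fun i _ => step1u (a * u i) (star (u i))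
      _ = ∑ j, ∑ i, u j * (E ((star (u j) * a) * u i) * star (u i)) := by
          rw [Finset.sum_comm]
          simp_rw [mul_assoc]
      _ = ∑ j, u j * ∑ i, E ((star (u j) * a) * u i) * star (u i) := by
          simp_rw [Finset.mul_sum]
      _ = ∑ j, u j * (star (u j) * a) :=
          Finset.sum_congr rfl fun j _ => by rw [← hu' (star (u j) * a)]
      _ = (∑ j, u j * star (u j)) * a := by
          rw [Finset.sum_mul]; simp_rw [mul_assoc]
  -- positivity
  have hposc : (0 : A) ≤ ∑ i, u i * star (u i) :=
    Finset.sum_nonneg fun i _ => mul_star_self_nonneg (u i)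
  -- invertibility
  set c : A := ∑ i, u i * star (u i) with hc
  have hcsa : IsSelfAdjoint c := IsSelfAdjoint.of_nonneg hposc
  have hinv : IsUnit c := by
    by_contra hcu
    have h0 : (0 : ℝ) ∈ spectrum ℝ c := (spectrum.zero_mem_iff ℝ).mpr hcu
    set M : ℝ := (∑ i, ‖u i‖) * ‖E‖ with hM
    have hM0 : 0 ≤ M :=
      mul_nonneg (Finset.sum_nonneg fun i _ => norm_nonneg _) (norm_nonneg _)
    set s : ℝ := 1 / (2 * (M + 1)) with hs
    have hs0 : 0 < s := by positivity
    set ε : ℝ := s ^ 2 with hε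
    have hε0 : 0 < ε := by positivity
    set f : ℝ → ℝ := fun t => 1 - min 1 (t / ε) with hf
    have hfc : Continuous f := by
      apply continuous_const.sub
      exact continuous_const.min (continuous_id.div_const ε)
    have hf0 : f 0 = 1 := by simp [hf, hε0.le]
    have hf_mem : ∀ t : ℝ, 0 ≤ t → 0 ≤ f t ∧ f t ≤ 1 := by
      intro t ht
      constructor
      · simp only [hf, sub_nonneg, min_le_iff]
        left; rfl
      · simp only [hf]
        have : 0 ≤ min 1 (t / ε) := le_min one_pos.le (by positivity)
        linarith
    have hf_small : ∀ t : ℝ, 0 ≤ t → f t * t * f t ≤ ε := by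
      intro t ht
      rcases le_or_gt t ε with h | h
      · have h1 := hf_mem t ht
        nlinarith [mul_nonneg (mul_nonneg ht (sub_nonneg.mpr h1.2))
          (by linarith [h1.1] : (0:ℝ) ≤ 1 + f t)]
      · have : f t = 0 := by
          simp only [hf, sub_eq_zero]
          symm
          apply min_eq_left
          rw [le_div_iff₀ hε0]
          linarith
        simp [this, hε0.le]
    set p : A := cfc f c with hp
    have hpsa : IsSelfAdjoint p := cfc_predicate f c
    -- lower bound ‖p‖ ≥ 1
    have hp1 : (1 : ℝ) ≤ ‖p‖ := by
      have := norm_apply_le_norm_cfc f c h0 (hfc.continuousOn) hcsa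
      rwa [hf0, norm_one] at this
    -- upper bound for ‖star (u i) * p‖
    have hyp : ∀ i, ‖star (u i) * p‖ ≤ s := by
      intro i
      have hsq : ‖star (u i) * p‖ * ‖star (u i) * p‖ ≤ ε := by
        rw [← CStarRing.norm_star_mul_self]
        have hterm : u i * star (u i) ≤ c :=
          Finset.single_le_sum (f := fun i => u i * star (u i))
            (fun i _ => mul_star_self_nonneg (u i)) (Finset.mem_univ i)
        have hconj : star (star (u i) * p) * (star (u i) * p) = p * (u i * star (u i)) * p := by
          rw [star_mul, star_star, hpsa.star_eq]
          noncomm_ring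
        rw [hconj]
        have hle : p * (u i * star (u i)) * p ≤ p * c * p := by
          simpa [hpsa.star_eq] using star_left_conjugate_le_conjugate hterm p
        have hnn : 0 ≤ p * (u i * star (u i)) * p := by
          have := star_left_conjugate_nonneg (mul_star_self_nonneg (u i)) p
          simpa [hpsa.star_eq] using this
        calc ‖p * (u i * star (u i)) * p‖ ≤ ‖p * c * p‖ :=
              CStarAlgebra.norm_le_norm_of_nonneg_of_le hnn hle
          _ = ‖cfc (fun t => f t * t * f t) c‖ := by
              congr 1
              rw [cfc_mul _ _ c (by fun_prop) (by fun_prop),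
                cfc_mul _ _ c (by fun_prop) (by fun_prop), cfc_id' ℝ c]
          _ ≤ ε := by
              apply norm_cfc_le hε0.le
              intro t ht
              have ht0 : 0 ≤ t := spectrum_nonneg_of_nonneg hposc ht
              rw [Real.norm_eq_abs, _root_.abs_of_nonneg
                (mul_nonneg (mul_nonneg (hf_mem t ht0).1 ht0) (hf_mem t ht0).1)]
              exact hf_small t ht0
      nlinarith [norm_nonneg (star (u i) * p), hs0]
    -- conclude: ‖p‖ ≤ M * s ≤ 1/2 < 1
    have hub : ‖p‖ ≤ M * s := by
      calc ‖p‖ = ‖∑ i, u i * E (star (u i) * p)‖ := by rw [← hu p]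
        _ ≤ ∑ i, ‖u i * E (star (u i) * p)‖ := norm_sum_le _ _
        _ ≤ ∑ i, ‖u i‖ * (‖E‖ * s) := by
            apply Finset.sum_le_sum
            intro i _
            calc ‖u i * E (star (u i) * p)‖ ≤ ‖u i‖ * ‖E (star (u i) * p)‖ := norm_mul_le _ _
              _ ≤ ‖u i‖ * (‖E‖ * ‖star (u i) * p‖) :=
                  mul_le_mul_of_nonneg_left (E.le_opNorm _) (norm_nonneg _)
              _ ≤ ‖u i‖ * (‖E‖ * s) := by
                  apply mul_le_mul_of_nonneg_left _ (norm_nonneg _)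
                  exact mul_le_mul_of_nonneg_left (hyp i) (norm_nonneg _)
        _ = M * s := by rw [hM, mul_assoc, ← Finset.sum_mul]
    have : M * s ≤ 1 / 2 := by
      rw [hs]
      rw [mul_one_div, div_le_div_iff₀ (by positivity) (by norm_num)]
      nlinarith
    linarith
  exact ⟨hequal, hposc, hinv, hcentral⟩
end

section
/- Let A be a C*-algebra (not necessarily unital), let B ⊆ P ⊆ A be closed star-subalgebras, let E : A → A be a faithful conditional expectation from A onto B (i.e., E(a^* a) = 0 implies a = 0), and let F, G : A → A be conditional expectations from A onto P satisfying E(F(x)) = E(x) and E(G(x)) = E(x) for all x ∈ A. Then F = G. (Hence an intermediate subalgebra P is compatible with E via at most one conditional expectation.) -/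
open Filter Topology

noncomputable def phiAux (n : ℕ) (t : ℝ) : ℝ := min ((n + 1) * t) 1

lemma phiAux_cont (n : ℕ) : Continuous (phiAux n) := by
  unfold phiAux; fun_prop

lemma phiAux_zero (n : ℕ) : phiAux n 0 = 0 := by simp [phiAux]

lemma phiAux_bound (n : ℕ) {t : ℝ} (ht : 0 ≤ t) : |phiAux n t| ≤ 1 := by
  rw [abs_le]
  have h2 : (0:ℝ) ≤ (n + 1) * t := by positivity
  exact ⟨le_min (by linarith) (by norm_num), min_le_right _ _⟩

lemma phiAux_key (n : ℕ) {t : ℝ} (ht : 0 ≤ t) :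
    |phiAux n t * t * phiAux n t - phiAux n t * t - t * phiAux n t + t| ≤ 1 / (n + 1) := by
  have h1 : phiAux n t * t * phiAux n t - phiAux n t * t - t * phiAux n t + t
      = t * (1 - phiAux n t) ^ 2 := by ring
  rw [h1]
  rcases le_or_gt 1 ((n + 1 : ℝ) * t) with h | h
  · rw [show phiAux n t = 1 from min_eq_right h]
    simp
    positivity
  · rw [show phiAux n t = (n + 1) * t from min_eq_left h.le]
    have h2 : 0 ≤ (n + 1 : ℝ) * t := by positivity
    have h4 : t ≤ 1 / (n + 1) := by
      rw [le_div_iff₀ (by positivity)]; nlinarith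
    have h3 : (1 - ((n:ℝ)+1)*t)^2 ≤ 1 := by nlinarith
    rw [abs_of_nonneg (by positivity)]
    calc t * (1 - ((n:ℝ)+1)*t)^2 ≤ t * 1 := by nlinarith [sq_nonneg (1 - ((n:ℝ)+1)*t)]
    _ ≤ 1 / (n+1) := by linarith

section
variable {A : Type*} [NonUnitalCStarAlgebra A] [PartialOrder A] [StarOrderedRing A]

lemma wnorm_le (n : ℕ) {h : A} (hh : 0 ≤ h) : ‖cfcₙ (phiAux n) h‖ ≤ 1 :=
  norm_cfcₙ_le fun t ht => phiAux_bound n (quasispectrum_nonneg_of_nonneg h hh t ht)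

omit [PartialOrder A] [StarOrderedRing A] in
lemma wsa (n : ℕ) (h : A) : IsSelfAdjoint (cfcₙ (phiAux n) h) := cfcₙ_predicate _ _

lemma key_norm_bound (n : ℕ) {h : A} (hh : 0 ≤ h) :
    ‖cfcₙ (phiAux n) h * h * cfcₙ (phiAux n) h - cfcₙ (phiAux n) h * h
      - h * cfcₙ (phiAux n) h + h‖ ≤ 1 / (n + 1) := by
  have hsa : IsSelfAdjoint h := hh.isSelfAdjoint
  have hc : ContinuousOn (phiAux n) (quasispectrum ℝ h) := (phiAux_cont n).continuousOn
  have hid : ContinuousOn (fun t : ℝ => t) (quasispectrum ℝ h) := by fun_prop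
  have h0 := phiAux_zero n
  have e1 : cfcₙ (phiAux n) h * h = cfcₙ (fun t => phiAux n t * t) h := by
    rw [cfcₙ_mul _ _ h hc h0 hid rfl, cfcₙ_id' ℝ h]
  have e2 : h * cfcₙ (phiAux n) h = cfcₙ (fun t => t * phiAux n t) h := by
    rw [cfcₙ_mul _ _ h hid rfl hc h0, cfcₙ_id' ℝ h]
  have e3 : cfcₙ (phiAux n) h * h * cfcₙ (phiAux n) h
      = cfcₙ (fun t => phiAux n t * t * phiAux n t) h := by
    rw [cfcₙ_mul (fun t => phiAux n t * t) _ h (hc.mul hid) (by simp [h0]) hc h0, ← e1]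
  have E : cfcₙ (fun t => phiAux n t * t * phiAux n t - phiAux n t * t - t * phiAux n t + t) h
      = cfcₙ (phiAux n) h * h * cfcₙ (phiAux n) h - cfcₙ (phiAux n) h * h
        - h * cfcₙ (phiAux n) h + h := by
    rw [cfcₙ_add _ _ h (by fun_prop) (by simp [h0]) hid rfl,
      cfcₙ_sub (fun t => phiAux n t * t * phiAux n t - phiAux n t * t) (fun t => t * phiAux n t) h (by fun_prop) (by simp [h0]) (hid.mul hc) (by simp [h0]),
      cfcₙ_sub (fun t => phiAux n t * t * phiAux n t) (fun t => phiAux n t * t) h ((hc.mul hid).mul hc) (by simp [h0]) (hc.mul hid) (by simp [h0]),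
      ← e1, ← e2, ← e3, cfcₙ_id' ℝ h]
  rw [← E]
  exact norm_cfcₙ_le fun t ht => phiAux_key n (quasispectrum_nonneg_of_nonneg h hh t ht)
end
section
variable {A : Type*} [NonUnitalCStarAlgebra A] [PartialOrder A] [StarOrderedRing A]

open Filter Topology

lemma sqrt_seq_tendsto : Filter.Tendsto (fun n : ℕ => Real.sqrt (1 / (n + 1))) atTop (𝓝 0) := by
  have := tendsto_one_div_add_atTop_nhds_zero_nat (𝕜 := ℝ)
  exact (Real.continuous_sqrt.tendsto' 0 0 (by simp)).comp this

lemma norm_mul_sub_le_right (n : ℕ) (z : A) :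
    ‖z * cfcₙ (phiAux n) (star z * z) - z‖ ≤ Real.sqrt (1 / (n + 1)) := by
  set h := star z * z with hh_def
  have hh : 0 ≤ h := star_mul_self_nonneg z
  set w := cfcₙ (phiAux n) h with hw
  have expand : star (z * w - z) * (z * w - z) = w * h * w - w * h - h * w + h := by
    simp only [star_sub, star_mul, (wsa n h).star_eq, hh_def]
    rw [show star w = w from (wsa n h).star_eq]
    noncomm_ring
  have hb : ‖z * w - z‖ * ‖z * w - z‖ ≤ 1 / (n + 1) := by
    rw [← CStarRing.norm_star_mul_self, expand]
    exact key_norm_bound n hh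
  rw [← Real.sqrt_mul_self (norm_nonneg (z * w - z))]
  exact Real.sqrt_le_sqrt hb

lemma norm_mul_sub_le_left (n : ℕ) (z : A) :
    ‖cfcₙ (phiAux n) (z * star z) * z - z‖ ≤ Real.sqrt (1 / (n + 1)) := by
  set k := z * star z with hk_def
  have hk : 0 ≤ k := mul_star_self_nonneg z
  set v := cfcₙ (phiAux n) k with hv
  have expand : (v * z - z) * star (v * z - z) = v * k * v - v * k - k * v + k := by
    simp only [star_sub, star_mul, (wsa n k).star_eq, hk_def]
    rw [show star v = v from (wsa n k).star_eq]
    noncomm_ring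
  have hb : ‖v * z - z‖ * ‖v * z - z‖ ≤ 1 / (n + 1) := by
    rw [← CStarRing.norm_self_mul_star, expand]
    exact key_norm_bound n hk
  rw [← Real.sqrt_mul_self (norm_nonneg (v * z - z))]
  exact Real.sqrt_le_sqrt hb

lemma tendsto_vdw (d : A) :
    Filter.Tendsto (fun n : ℕ =>
      cfcₙ (phiAux n) (d * star d) * d * cfcₙ (phiAux n) (star d * d)) atTop (𝓝 d) := by
  set v := fun n : ℕ => cfcₙ (phiAux n) (d * star d) with hv
  set w := fun n : ℕ => cfcₙ (phiAux n) (star d * d) with hw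
  have h1 : Filter.Tendsto (fun n => v n * (d * w n - d)) atTop (𝓝 0) := by
    apply squeeze_zero_norm (fun n => ?_) sqrt_seq_tendsto
    calc ‖v n * (d * w n - d)‖ ≤ ‖v n‖ * ‖d * w n - d‖ := norm_mul_le _ _
    _ ≤ 1 * Real.sqrt (1 / (n + 1)) := by
        gcongr
        · exact wnorm_le n (mul_star_self_nonneg d)
        · exact norm_mul_sub_le_right n d
    _ = Real.sqrt (1 / (n + 1)) := one_mul _
  have h2 : Filter.Tendsto (fun n => v n * d) atTop (𝓝 d) := by
    rw [show (𝓝 d) = 𝓝 (0 + d) by rw [zero_add]]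
    have h3 : Filter.Tendsto (fun n => (v n * d - d)) atTop (𝓝 0) := by
      rw [tendsto_zero_iff_norm_tendsto_zero]
      exact squeeze_zero_norm (fun n => by simpa using norm_mul_sub_le_left n d) sqrt_seq_tendsto
    have h4 := h3.add (tendsto_const_nhds (x := d) (f := atTop))
    simpa using h4
  have := h1.add h2
  rw [zero_add] at this
  convert this using 2 with n
  simp only [mul_sub, sub_add_cancel, mul_assoc]
  rfl
end


open scoped ContinuousMapZero

lemma cfcn_mem_closed {A : Type*} [NonUnitalCStarAlgebra A] [PartialOrder A] [StarOrderedRing A]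
    (P : NonUnitalStarSubalgebra ℂ A) (hP : IsClosed (P : Set A))
    {a : A} (haP : a ∈ P) (ha : IsSelfAdjoint a) (f : ℝ → ℝ) :
    cfcₙ f a ∈ P := by
  by_cases hf : ContinuousOn f (quasispectrum ℝ a) ∧ f 0 = 0
  · obtain ⟨hf₁, hf₂⟩ := hf
    rw [cfcₙ_apply f a hf₁ hf₂ ha]
    have h0 : ((0 : quasispectrum ℝ a) : ℝ) = 0 := rfl
    suffices H : ∀ g : C(quasispectrum ℝ a, ℝ)₀, cfcₙHom (R := ℝ) ha g ∈ P from H _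
    intro g
    induction g using ContinuousMapZero.induction_on_of_compact with
    | zero => rw [map_zero]; exact zero_mem _
    | id => rw [cfcₙHom_id (R := ℝ) ha]; exact haP
    | star_id => rw [map_star, cfcₙHom_id (R := ℝ) ha]; exact star_mem haP
    | add f g hf hg => rw [map_add]; exact add_mem hf hg
    | mul f g hf hg => rw [map_mul]; exact mul_mem hf hg
    | smul r f hf =>
        rw [map_smul, show r • cfcₙHom (R := ℝ) ha f = (r : ℂ) • cfcₙHom (R := ℝ) ha f by
          rw [Complex.coe_smul]]
        exact SMulMemClass.smul_mem _ hf
    | frequently f hf =>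
        exact hf.mem_of_closed <| hP.preimage (cfcₙHom_continuous (R := ℝ) ha)
  · rw [not_and_or] at hf
    rcases hf with hf | hf
    · rw [cfcₙ_apply_of_not_continuousOn a hf]; exact zero_mem _
    · rw [cfcₙ_apply_of_not_map_zero a hf]; exact zero_mem _




/-- If `E : A → B` is a faithful conditional expectation and `F, G : A → P` are
conditional expectations onto an intermediate closed star-subalgebra `B ⊆ P ⊆ A` with
`E ∘ F = E` and `E ∘ G = E`, then `F = G`: an intermediate subalgebra is compatible with `E`
via at most one conditional expectation. -/
theorem compatible_expectation_unique
    {A : Type*} [NonUnitalCStarAlgebra A] [PartialOrder A] [StarOrderedRing A]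
    (B P : NonUnitalStarSubalgebra ℂ A) (hB : IsClosed (B : Set A))
    (hP : IsClosed (P : Set A)) (hBP : B ≤ P)
    (E : A →L[ℂ] A)
    (hErange : ∀ a : A, E a ∈ B)
    (hEfix : ∀ b ∈ B, E b = b)
    (hEpos : ∀ a : A, 0 ≤ a → 0 ≤ E a)
    (hEbimod : ∀ b ∈ B, ∀ b' ∈ B, ∀ x : A, E (b * x * b') = b * E x * b')
    (hEfaithful : ∀ a : A, E (star a * a) = 0 → a = 0)
    (F G : A →L[ℂ] A)
    (hFrange : ∀ a : A, F a ∈ P)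
    (hFfix : ∀ p ∈ P, F p = p)
    (hFpos : ∀ a : A, 0 ≤ a → 0 ≤ F a)
    (hFbimod : ∀ p ∈ P, ∀ p' ∈ P, ∀ x : A, F (p * x * p') = p * F x * p')
    (hGrange : ∀ a : A, G a ∈ P)
    (hGfix : ∀ p ∈ P, G p = p)
    (hGpos : ∀ a : A, 0 ≤ a → 0 ≤ G a)
    (hGbimod : ∀ p ∈ P, ∀ p' ∈ P, ∀ x : A, G (p * x * p') = p * G x * p')
    (hEF : ∀ x : A, E (F x) = E x)
    (hEG : ∀ x : A, E (G x) = E x) :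
    F = G := by
  ext x
  have key : F x - G x = 0 := by
    set d := F x - G x with hd_def
    have hdP : d ∈ P := sub_mem (hFrange x) (hGrange x)
    apply hEfaithful
    set v := fun n : ℕ => cfcₙ (phiAux n) (d * star d) with hv
    set w := fun n : ℕ => cfcₙ (phiAux n) (star d * d) with hw
    have hvP : ∀ n, v n ∈ P := fun n =>
      cfcn_mem_closed P hP (mul_mem hdP (star_mem hdP))
        (IsSelfAdjoint.of_nonneg (mul_star_self_nonneg d)) _
    have hwP : ∀ n, w n ∈ P := fun n =>
      cfcn_mem_closed P hP (mul_mem (star_mem hdP) hdP)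
        (IsSelfAdjoint.of_nonneg (star_mul_self_nonneg d)) _
    have hzero : ∀ n : ℕ, E (star d * (v n * d * w n)) = 0 := by
      intro n
      have hq : star d * v n ∈ P := mul_mem (star_mem hdP) (hvP n)
      have hFq : star d * (v n * F x * w n) = F ((star d * v n) * x * w n) := by
        rw [hFbimod _ hq _ (hwP n) x]
        simp only [mul_assoc]
      have hGq : star d * (v n * G x * w n) = G ((star d * v n) * x * w n) := by
        rw [hGbimod _ hq _ (hwP n) x]
        simp only [mul_assoc]
      have e : star d * (v n * d * w n)
          = star d * (v n * F x * w n) - star d * (v n * G x * w n) := by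
        rw [hd_def]; noncomm_ring
      rw [e, map_sub, hFq, hGq, hEF, hEG, sub_self]
    have h5 := tendsto_vdw d
    have h6 : Tendsto (fun n => star d * (v n * d * w n)) atTop (𝓝 (star d * d)) :=
      h5.const_mul (star d)
    have h7 : Tendsto (fun n => E (star d * (v n * d * w n))) atTop (𝓝 (E (star d * d))) :=
      (E.continuous.tendsto _).comp h6
    simp only [hzero] at h7
    exact (tendsto_nhds_unique tendsto_const_nhds h7).symm
  exact sub_eq_zero.mp key
end
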